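/- Let I and J be non-empty subsets of {1,...,n}. The spaces V_I = K·D_I ⊕ NT_n(K) and V_J = K·D_J ⊕ NT_n(K) are similar (conjugate by an element of GL_n(K)) if and only if I = J. -/
import Mathlib


/-- Membership in `V_I = K·D_I ⊕ NT_n(K)`. -/
def memVI {K : Type*} [Field K] {n : ℕ} (I : Set (Fin n))
    (M : Matrix (Fin n) (Fin n) K) : Prop :=
  (∀ i j : Fin n, j < i → M i j = 0) ∧ (∀ i : Fin n, i ∉ I → M i i = 0) ∧
    (∀ i ∈ I, ∀ j ∈ I, M i i = M j j)

section helpers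
open Matrix Finset
variable {K : Type*} [Field K] {n : ℕ}

lemma ut_mul {A B : Matrix (Fin n) (Fin n) K} (hA : ∀ i j : Fin n, j < i → A i j = 0)
    (hB : ∀ i j : Fin n, j < i → B i j = 0) :
    (∀ i j : Fin n, j < i → (A * B) i j = 0) ∧ (∀ i, (A * B) i i = A i i * B i i) := by
  constructor
  · intro i j hji
    rw [Matrix.mul_apply]
    apply Finset.sum_eq_zero
    intro m _
    rcases lt_or_ge m i with h | h
    · rw [hA i m h, zero_mul]
    · rw [hB m j (lt_of_lt_of_le hji h), mul_zero]
  · intro i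
    rw [Matrix.mul_apply]
    rw [Finset.sum_eq_single i (fun m _ hm => ?_) (by simp)]
    rcases lt_or_ge m i with h | h
    · rw [hA i m h, zero_mul]
    · rw [hB m i (lt_of_le_of_ne h (Ne.symm hm)), mul_zero]

lemma ut_pow_diag {A : Matrix (Fin n) (Fin n) K} (hA : ∀ i j : Fin n, j < i → A i j = 0)
    (k : ℕ) : (∀ i j : Fin n, j < i → (A ^ k) i j = 0) ∧ (∀ i, (A ^ k) i i = (A i i) ^ k) := by
  induction k with
  | zero => exact ⟨fun i j h => by simpa using Matrix.one_apply_ne (ne_of_gt h), fun i => by simp [Matrix.one_apply]⟩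
  | succ m ih =>
    have h1 := ut_mul ih.1 hA
    refine ⟨h1.1, fun i => ?_⟩
    rw [pow_succ, h1.2, ih.2, pow_succ]

lemma sut_pow {N : Matrix (Fin n) (Fin n) K} (hN : ∀ i j : Fin n, j ≤ i → N i j = 0) :
    ∀ (k : ℕ) (i j : Fin n), (j : ℕ) < (i : ℕ) + k → (N ^ k) i j = 0 := by
  intro k
  induction k with
  | zero => intro i j h; simp at h; exact Matrix.one_apply_ne (Fin.ne_of_gt h)
  | succ m ih =>
    intro i j h
    rw [pow_succ, Matrix.mul_apply]
    apply Finset.sum_eq_zero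
    intro t _
    rcases lt_or_ge (t : ℕ) ((i : ℕ) + m) with ht | ht
    · rw [ih i t ht, zero_mul]
    · have : (j : ℕ) ≤ (t : ℕ) := by omega
      rw [hN t j (by exact_mod_cast this), mul_zero]

lemma sut_pow_n {N : Matrix (Fin n) (Fin n) K} (hN : ∀ i j : Fin n, j ≤ i → N i j = 0) :
    N ^ n = 0 := by
  ext i j
  rw [sut_pow hN n i j (by omega)]
  simp

lemma det_zero_of_block {Q : Matrix (Fin n) (Fin n) K} {a b : Fin n} (hba : b < a)
    (h : ∀ k i : Fin n, i < a → b ≤ k → Q k i = 0) : Q.det = 0 := by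
  rw [Matrix.det_apply]
  apply Finset.sum_eq_zero
  intro σ _
  have hex : ∃ i : Fin n, i < a ∧ b ≤ σ i := by
    by_contra hc
    push_neg at hc
    have hsub : (Finset.Iio a).image σ ⊆ Finset.Iio b := by
      intro k hk
      simp only [Finset.mem_image, Finset.mem_Iio] at *
      obtain ⟨i, hi, rfl⟩ := hk
      exact hc i hi
    have h1 : (Finset.Iio a).card ≤ (Finset.Iio b).card := by
      calc (Finset.Iio a).card = ((Finset.Iio a).image σ).card :=
            (Finset.card_image_of_injective _ σ.injective).symm
        _ ≤ _ := Finset.card_le_card hsub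
    rw [Fin.card_Iio, Fin.card_Iio] at h1
    omega
  obtain ⟨i, hia, hbi⟩ := hex
  have hz : (∏ x : Fin n, Q (σ x) x) = 0 :=
    Finset.prod_eq_zero (Finset.mem_univ i) (h (σ i) i hia hbi)
  rw [hz, smul_zero]

lemma conj_std_apply (P Q : Matrix (Fin n) (Fin n) K) (i j k l : Fin n) :
    (P * Matrix.single i j (1:K) * Q) k l = P k i * Q j l := by
  rw [Matrix.mul_assoc, Matrix.mul_apply]
  rw [Finset.sum_eq_single i (fun m _ hm => ?_) (by simp)]
  · congr 1
    rw [Matrix.mul_apply]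
    rw [Finset.sum_eq_single j (fun t _ ht => by simp [Matrix.single, Ne.symm ht]) (by simp)]
    simp [Matrix.single]
  · have hz : (Matrix.single i j (1:K) * Q) m l = 0 := by
      rw [Matrix.mul_apply]
      apply Finset.sum_eq_zero
      intro t _
      simp [Matrix.single, Ne.symm hm]
    rw [hz, mul_zero]

lemma myConjPow (A B M : Matrix (Fin n) (Fin n) K) (hAB : A * B = 1) (hBA : B * A = 1) (k : ℕ) :
    (A * M * B) ^ k = A * M ^ k * B := by
  induction k with
  | zero => simp [hAB]
  | succ m ih =>
    rw [pow_succ, ih, pow_succ]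
    calc A * M ^ m * B * (A * M * B) = A * M ^ m * (B * A) * M * B := by
          simp only [Matrix.mul_assoc]
      _ = A * (M ^ m * M) * B := by rw [hBA, Matrix.mul_one]; simp only [Matrix.mul_assoc]

/-- entries condition from nilpotent transfer -/
lemma conj_entries {A B : Matrix (Fin n) (Fin n) K} (hn : n ≠ 0)
    (hAB : A * B = 1) (hBA : B * A = 1) {J : Set (Fin n)}
    (h : ∀ M : Matrix (Fin n) (Fin n) K, (∀ i j : Fin n, j ≤ i → M i j = 0) → memVI J (A * M * B)) :
    ∀ i j : Fin n, i < j → ∀ k l : Fin n, l ≤ k → A k i * B j l = 0 := by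
  intro i j hij k l hlk
  set E := Matrix.single i j (1:K) with hE
  have hEsut : ∀ a b : Fin n, b ≤ a → E a b = 0 := by
    intro a b hba
    simp only [hE, Matrix.single, Matrix.of_apply]
    rw [if_neg]
    rintro ⟨rfl, rfl⟩
    exact absurd hij (not_lt.mpr hba)
  have hmem := h E hEsut
  have hpow : (A * E * B) ^ n = 0 := by
    rw [myConjPow A B E hAB hBA n, sut_pow_n hEsut]
    simp
  have hut : ∀ a b : Fin n, b < a → (A * E * B) a b = 0 := hmem.1
  have hdiag : ∀ a : Fin n, (A * E * B) a a = 0 := by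
    intro a
    have h2 := (ut_pow_diag hut n).2 a
    rw [hpow] at h2
    have h3 : ((A * E * B) a a) ^ n = 0 := by simpa using h2.symm
    exact pow_eq_zero_iff hn |>.mp h3
  have hz : (A * E * B) k l = 0 := by
    rcases lt_or_eq_of_le hlk with h' | h'
    · exact hut k l h'
    · subst h'; exact hdiag l
  rwa [conj_std_apply] at hz

end helpers

/-- `V_I` and `V_J` are similar iff `I = J`. -/
theorem stmt11 {K : Type*} [Field K] (n : ℕ) (I J : Set (Fin n))
    (hI : I.Nonempty) (hJ : J.Nonempty) :
    (∃ P : Matrix (Fin n) (Fin n) K, IsUnit P ∧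
        (fun M => P * M * P⁻¹) '' {M : Matrix (Fin n) (Fin n) K | memVI I M} =
          {M : Matrix (Fin n) (Fin n) K | memVI J M}) ↔ I = J := by
  classical
  constructor
  · rintro ⟨P, hP, hS⟩
    obtain ⟨i0, hi0⟩ := hI
    have hn : n ≠ 0 := i0.pos.ne'
    set Q := P⁻¹ with hQdef
    have hPdet : IsUnit P.det := (Matrix.isUnit_iff_isUnit_det P).mp hP
    have hPQ : P * Q = 1 := Matrix.mul_nonsing_inv P hPdet
    have hQP : Q * P = 1 := Matrix.nonsing_inv_mul P hPdet
    have fwd : ∀ M : Matrix (Fin n) (Fin n) K, memVI I M → memVI J (P * M * Q) := by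
      intro M hM
      have : P * M * Q ∈ {M : Matrix (Fin n) (Fin n) K | memVI J M} := by
        rw [← hS]; exact ⟨M, hM, rfl⟩
      exact this
    have bwd : ∀ N : Matrix (Fin n) (Fin n) K, memVI J N → memVI I (Q * N * P) := by
      intro N hN
      have hN' : N ∈ (fun M => P * M * Q) '' {M : Matrix (Fin n) (Fin n) K | memVI I M} := by
        rw [hS]; exact hN
      obtain ⟨M, hM, hMN⟩ := hN'
      have hQNP : Q * N * P = M := by
        rw [← hMN]
        show Q * (P * M * Q) * P = M
        calc Q * (P * M * Q) * P = (Q * P) * M * (Q * P) := by simp only [Matrix.mul_assoc]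
          _ = M := by rw [hQP, Matrix.one_mul, Matrix.mul_one]
      rw [hQNP]; exact hM
    have sut_memI : ∀ M : Matrix (Fin n) (Fin n) K,
        (∀ i j : Fin n, j ≤ i → M i j = 0) → memVI I M := by
      intro M hM
      exact ⟨fun i j h => hM i j h.le, fun i _ => hM i i le_rfl,
        fun i _ j _ => by rw [hM i i le_rfl, hM j j le_rfl]⟩
    have sut_memJ : ∀ M : Matrix (Fin n) (Fin n) K,
        (∀ i j : Fin n, j ≤ i → M i j = 0) → memVI J M := by
      intro M hM
      exact ⟨fun i j h => hM i j h.le, fun i _ => hM i i le_rfl,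
        fun i _ j _ => by rw [hM i i le_rfl, hM j j le_rfl]⟩
    have famPQ : ∀ i j : Fin n, i < j → ∀ k l : Fin n, l ≤ k → P k i * Q j l = 0 :=
      conj_entries hn hPQ hQP (fun M hM => fwd M (sut_memI M hM))
    have famQP : ∀ i j : Fin n, i < j → ∀ k l : Fin n, l ≤ k → Q k i * P j l = 0 :=
      conj_entries hn hQP hPQ (fun M hM => bwd M (sut_memJ M hM))
    have hdet1 : P.det * Q.det = 1 := by
      rw [← Matrix.det_mul, hPQ, Matrix.det_one]
    have hPut : ∀ a b : Fin n, b < a → P a b = 0 := by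
      intro a b hba
      by_contra hPab
      have hQblock : ∀ k i : Fin n, i < a → b ≤ k → Q k i = 0 := by
        intro k i hia hbk
        have := famQP i a hia k b hbk
        rcases mul_eq_zero.mp this with h | h
        · exact h
        · exact absurd h hPab
      have := det_zero_of_block hba hQblock
      rw [this, mul_zero] at hdet1
      exact one_ne_zero hdet1.symm
    have hQut : ∀ a b : Fin n, b < a → Q a b = 0 := by
      intro a b hba
      by_contra hQab
      have hPblock : ∀ k i : Fin n, i < a → b ≤ k → P k i = 0 := by
        intro k i hia hbk
        have := famPQ i a hia k b hbk
        rcases mul_eq_zero.mp this with h | h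
        · exact h
        · exact absurd h hQab
      have := det_zero_of_block hba hPblock
      rw [this, zero_mul] at hdet1
      exact one_ne_zero hdet1.symm
    have hPQdiag : ∀ a : Fin n, P a a * Q a a = 1 := by
      intro a
      have := (ut_mul hPut hQut).2 a
      rw [hPQ, Matrix.one_apply_eq] at this
      exact this.symm
    have hdiag : ∀ (M : Matrix (Fin n) (Fin n) K),
        (∀ i j : Fin n, j < i → M i j = 0) → ∀ a, (P * M * Q) a a = M a a := by
      intro M hMut a
      have h1 := ut_mul hPut hMut
      have h2 := (ut_mul h1.1 hQut).2 a
      rw [h2, h1.2 a]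
      calc P a a * M a a * Q a a = M a a * (P a a * Q a a) := by ring
        _ = M a a := by rw [hPQdiag a, mul_one]
    set D : Matrix (Fin n) (Fin n) K :=
      Matrix.diagonal (fun i => if i ∈ I then (1:K) else 0) with hD
    have hDmem : memVI I D := by
      refine ⟨fun i j h => Matrix.diagonal_apply_ne _ (ne_of_gt h), fun i hi => ?_, fun i hi j hj => ?_⟩
      · simp [hD, Matrix.diagonal_apply_eq, hi]
      · simp [hD, Matrix.diagonal_apply_eq, hi, hj]
    have hDut : ∀ i j : Fin n, j < i → D i j = 0 := hDmem.1
    have hM' := fwd D hDmem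
    have hM'diag : ∀ a : Fin n, (P * D * Q) a a = if a ∈ I then (1:K) else 0 := by
      intro a
      rw [hdiag D hDut a, hD, Matrix.diagonal_apply_eq]
    have hIJ : I ⊆ J := by
      intro a ha
      by_contra haJ
      have := hM'.2.1 a haJ
      rw [hM'diag a, if_pos ha] at this
      exact one_ne_zero this
    have hJI : J ⊆ I := by
      intro a ha
      by_contra haI
      have := hM'.2.2 a ha i0 (hIJ hi0)
      rw [hM'diag a, hM'diag i0, if_neg haI, if_pos hi0] at this
      exact one_ne_zero this.symm
    exact Set.Subset.antisymm hIJ hJI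
  · rintro rfl
    refine ⟨1, isUnit_one, ?_⟩
    simp [inv_one]
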